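/- Let n, K be positive integers, h : Fin K → Fin n → {−1,1}, y : Fin n → {−1,1}, α > 0, and suppose ∏_{k=1}^K Z_k ≤ ε/n where Z_k are the AdaBoost normalization factors (defined recursively from D₁ uniform as in the weight-update rule with step size α). Then for every i, sign(∑_{k=1}^K h_k(i)) = y_i, provided ε < 1. -/

import Mathlib

theorem stmt18 (n K : ℕ) (hn : 0 < n) (hK : 0 < K)
    (h : ℕ → Fin n → ℝ) (hh : ∀ k i, h k i = 1 ∨ h k i = -1)
    (y : Fin n → ℝ) (hy : ∀ i, y i = 1 ∨ y i = -1)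
    (α : ℝ) (hα : 0 < α)
    (D : ℕ → Fin n → ℝ) (Z : ℕ → ℝ)
    (hD0 : ∀ i, D 0 i = 1 / n)
    (hZ : ∀ k, Z k = ∑ i, D k i * Real.exp (-α * y i * h k i))
    (hD : ∀ k i, D (k+1) i = D k i * Real.exp (-α * y i * h k i) / Z k)
    (ε : ℝ) (hε : ε < 1)
    (hprod : ∏ k ∈ Finset.range K, Z k ≤ ε / n) :
    ∀ i, Real.sign (∑ k ∈ Finset.range K, h k i) = y i := by
  have hn' : (0:ℝ) < n := by exact_mod_cast hn
  have _inst : Nonempty (Fin n) := ⟨⟨0, hn⟩⟩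
  have hne : (Finset.univ : Finset (Fin n)).Nonempty := Finset.univ_nonempty
  have hDpos : ∀ m i, 0 < D m i := by
    intro m
    induction m with
    | zero => intro i; rw [hD0]; positivity
    | succ m ih =>
      have hZm : 0 < Z m := by
        rw [hZ]
        exact Finset.sum_pos (fun i _ => mul_pos (ih i) (Real.exp_pos _)) hne
      intro i
      rw [hD]
      exact div_pos (mul_pos (ih i) (Real.exp_pos _)) hZm
  have hZpos : ∀ m, 0 < Z m := by
    intro m
    rw [hZ]
    exact Finset.sum_pos (fun i _ => mul_pos (hDpos m i) (Real.exp_pos _)) hne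
  have hsum : ∀ m, ∑ i, D m i = 1 := by
    intro m
    induction m with
    | zero =>
      simp only [hD0]
      rw [Finset.sum_const, Finset.card_univ, Fintype.card_fin]
      rw [nsmul_eq_mul]
      field_simp
    | succ m ih =>
      calc ∑ i, D (m+1) i
          = ∑ i, D m i * Real.exp (-α * y i * h m i) / Z m :=
            Finset.sum_congr rfl (fun i _ => hD m i)
        _ = (∑ i, D m i * Real.exp (-α * y i * h m i)) / Z m := by
            rw [Finset.sum_div]
        _ = 1 := by rw [← hZ]; exact div_self (hZpos m).ne'
  have key : ∀ m i, D m i * ∏ k ∈ Finset.range m, Z k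
      = (1/n) * Real.exp (-α * y i * ∑ k ∈ Finset.range m, h k i) := by
    intro m i
    induction m with
    | zero => simp [hD0]
    | succ m ih =>
      have hz := (hZpos m).ne'
      rw [Finset.prod_range_succ, Finset.sum_range_succ, hD, mul_add (-α * y i),
        Real.exp_add]
      set P := ∏ k ∈ Finset.range m, Z k with hP
      have step : D m i * Real.exp (-α * y i * h m i) / Z m * (P * Z m)
          = (D m i * P) * Real.exp (-α * y i * h m i) := by
        field_simp
      rw [step, ih]
      ring
  intro i
  set S := ∑ k ∈ Finset.range K, h k i with hS
  have hKey := key K i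
  have hDle : D K i ≤ 1 := by
    rw [← hsum K]
    exact Finset.single_le_sum (fun j _ => (hDpos K j).le) (Finset.mem_univ i)
  have hPpos : 0 < ∏ k ∈ Finset.range K, Z k := Finset.prod_pos (fun k _ => hZpos k)
  have hexp : Real.exp (-α * y i * S) < 1 := by
    have h1 : (1/(n:ℝ)) * Real.exp (-α * y i * S) ≤ ∏ k ∈ Finset.range K, Z k := by
      rw [← hKey]
      calc D K i * ∏ k ∈ Finset.range K, Z k ≤ 1 * ∏ k ∈ Finset.range K, Z k :=
            mul_le_mul_of_nonneg_right hDle hPpos.le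
        _ = ∏ k ∈ Finset.range K, Z k := one_mul _
    have h2 : (1/(n:ℝ)) * Real.exp (-α * y i * S) ≤ ε / n := h1.trans hprod
    have h3 : Real.exp (-α * y i * S) ≤ ε := by
      rw [one_div, inv_mul_eq_div] at h2
      exact (div_le_div_iff_of_pos_right hn').mp h2
    linarith
  have hneg : -α * y i * S < 0 := Real.exp_lt_one_iff.mp hexp
  have hyS : 0 < y i * S := by
    by_contra hc
    push_neg at hc
    nlinarith
  rcases hy i with hy1 | hy1
  · rw [hy1] at hyS ⊢
    rw [one_mul] at hyS
    exact Real.sign_of_pos hyS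
  · rw [hy1] at hyS ⊢
    have : S < 0 := by nlinarith
    exact Real.sign_of_neg this
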